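/- Let p be a prime, m ≥ 1 and 1 ≤ s ≤ m integers, λ a positive integer with p ∣ λ, and π a permutation of {s, s+1, …, m}. Fix g_1, …, g_m, g ∈ ℤ_λ and an arbitrary function h : ℤ_p^{s−1} → ℤ_λ (with h = 0 when s = 1). Define f : ℤ_p^m → ℤ_λ by f(v_1, …, v_m) = (λ/p)·Σ_{i=s}^{m−1} v_{π(i)} v_{π(i+1)} + Σ_{i=1}^{m} g_i v_i + g + h(v_1, …, v_{s−1}) (mod λ), and for each γ ∈ ℤ_p define a^γ = f + (λ/p)·v_{π(s)}·γ (mod λ). Then for every integer τ with p^{s−1} < τ < p^m, Σ_{γ=0}^{p−1} ρ(ψ(a^γ))(τ) = 0; that is, the set {ψ(a^γ) : γ ∈ ℤ_p} is a type-II (p, p^m, p^m − p^{s−1})-Z-complementary set. -/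

import Mathlib

open Finset Complex



/-- `eZMod q x = ω_q^x` where `ω_q = exp(2π√-1/q)`. -/
noncomputable def eZMod (q : ℕ) (x : ZMod q) : ℂ :=
  Complex.exp (2 * (Real.pi : ℂ) * Complex.I * (x.val : ℂ) / (q : ℂ))

/-- Aperiodic autocorrelation of a sequence of length `L` at shift `τ`. -/
noncomputable def aacf (L : ℕ) (a : ℕ → ℂ) (τ : ℕ) : ℂ :=
  ∑ i ∈ Finset.range (L - τ), a i * (starRingEnd ℂ) (a (i + τ))

/-- `dig p i k` is the `k`-th base-`p` digit (1-indexed) of `i`, viewed in `ℤ_p`. -/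
def dig (p i : ℕ) (k : ℕ) : ZMod p :=
  (((i / p ^ (k - 1)) % p : ℕ) : ZMod p)


section basic
variable (q : ℕ)

noncomputable def zet (q : ℕ) : ℂ := Complex.exp (2 * (Real.pi:ℂ) * Complex.I / q)

lemma zet_pow_self (hq : q ≠ 0) : zet q ^ q = 1 := by
  rw [zet, ← Complex.exp_nat_mul]
  rw [show (q:ℂ) * (2 * (Real.pi:ℂ) * Complex.I / q) = 2 * Real.pi * Complex.I by
    have : (q:ℂ) ≠ 0 := by exact_mod_cast hq
    field_simp]
  exact Complex.exp_two_pi_mul_I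

lemma eZMod_eq_pow (x : ZMod q) : eZMod q x = zet q ^ x.val := by
  rw [zet, ← Complex.exp_nat_mul, eZMod]
  ring_nf

lemma zet_pow_mod (hq : q ≠ 0) (n : ℕ) : zet q ^ (n % q) = zet q ^ n := by
  conv_rhs => rw [← Nat.div_add_mod n q]
  rw [pow_add, pow_mul, zet_pow_self q hq, one_pow, one_mul]

lemma eZMod_add [NeZero q] (x y : ZMod q) : eZMod q (x + y) = eZMod q x * eZMod q y := by
  rw [eZMod_eq_pow, eZMod_eq_pow, eZMod_eq_pow, ZMod.val_add,
    zet_pow_mod q (NeZero.ne q), pow_add]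

lemma eZMod_natCast [NeZero q] (n : ℕ) : eZMod q ((n : ZMod q)) = zet q ^ n := by
  rw [eZMod_eq_pow, ZMod.val_natCast, zet_pow_mod q (NeZero.ne q)]

lemma conj_zet_mul (hq : q ≠ 0) : (starRingEnd ℂ) (zet q) * zet q = 1 := by
  rw [zet, ← Complex.exp_conj, ← Complex.exp_add]
  rw [show (starRingEnd ℂ) (2 * (Real.pi:ℂ) * Complex.I / q) = -(2 * (Real.pi:ℂ) * Complex.I / q) by
    simp [map_div₀, Complex.conj_I, map_ofNat]; ring]
  simp

lemma conj_zet (hq : q ≠ 0) : (starRingEnd ℂ) (zet q) = (zet q)⁻¹ :=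
  eq_inv_of_mul_eq_one_left (conj_zet_mul q hq)

lemma conj_eZMod [NeZero q] (x : ZMod q) :
    (starRingEnd ℂ) (eZMod q x) = (eZMod q x)⁻¹ := by
  rw [eZMod_eq_pow, map_pow, conj_zet q (NeZero.ne q), inv_pow]

lemma zet_ne_zero (hq : q ≠ 0) : zet q ≠ 0 := Complex.exp_ne_zero _

lemma eZMod_ne_zero [NeZero q] (x : ZMod q) : eZMod q x ≠ 0 := by
  rw [eZMod_eq_pow]; exact pow_ne_zero _ (zet_ne_zero q (NeZero.ne q))

lemma zet_pow_inj (hq : q ≠ 0) {a b : ℕ} (hab : zet q ^ a = zet q ^ b) : a % q = b % q := by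
  have hprim : IsPrimitiveRoot (zet q) q := Complex.isPrimitiveRoot_exp q hq
  have := hprim.pow_inj (Nat.mod_lt a (Nat.pos_of_ne_zero hq)) (Nat.mod_lt b (Nat.pos_of_ne_zero hq))
  apply this
  rw [zet_pow_mod q hq, zet_pow_mod q hq, hab]

end basic

theorem Nat.pos_pow_of_pos {b : ℕ} (n : ℕ) (h : 0 < b) : 0 < b ^ n := Nat.pow_pos h

/-- the `t`-th base-`p` digit (1-indexed). -/
def D' (p i t : ℕ) : ℕ := i / p ^ (t - 1) % p

/-- replace digit `k` (1-indexed) of `i` by `x`. -/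
def rep' (p k i x : ℕ) : ℕ := i % p ^ (k-1) + x * p ^ (k-1) + i / p ^ k * p ^ k

section digits
variable {p : ℕ} (hp : 1 < p)
include hp

lemma D'_lt (i t : ℕ) : D' p i t < p := Nat.mod_lt _ (by omega)

omit hp in
lemma pow_pred_mul {k : ℕ} (hk : 1 ≤ k) : p ^ (k-1) * p = p ^ k := by
  rw [← pow_succ]; congr 1; omega

lemma rep'_id {k : ℕ} (hk : 1 ≤ k) (i x : ℕ) :
    rep' p k i x + D' p i k * p ^ (k-1) = i + x * p ^ (k-1) := by
  have hpk := pow_pred_mul (p := p) hk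
  have h1 : i % p^(k-1) + p^(k-1) * (i / p^(k-1)) = i := Nat.mod_add_div i _
  have h2 : i / p^(k-1) % p + p * (i / p^(k-1) / p) = i / p^(k-1) := Nat.mod_add_div _ p
  have h3 : i / p^(k-1) / p = i / p ^ k := by
    rw [Nat.div_div_eq_div_mul, hpk]
  rw [rep', D', ← hpk, ← Nat.div_div_eq_div_mul]
  set P := p ^ (k-1)
  set a := i % P
  set b := i / P % p
  set c := i / P / p
  -- goal : a + x * P + c * (P * p) + b * P = i + x * P
  have hi : i = a + P * (b + p * c) := by rw [h2]; exact h1.symm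
  rw [hi]; ring

lemma rep'_self {k : ℕ} (hk : 1 ≤ k) (i : ℕ) : rep' p k i (D' p i k) = i := by
  have := rep'_id hp hk i (D' p i k); omega

lemma rep'_add {k : ℕ} (hk : 1 ≤ k) {i j τ x : ℕ} (hD : D' p i k = D' p j k)
    (hj : j = i + τ) : rep' p k j x = rep' p k i x + τ := by
  subst hj
  have h1 := rep'_id hp hk i x
  have h2 := rep'_id hp hk (i + τ) x
  rw [← hD] at h2; omega

lemma D'_rep'_self {k : ℕ} (hk : 1 ≤ k) (i : ℕ) {x : ℕ} (hx : x < p) :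
    D' p (rep' p k i x) k = x := by
  have hP : 0 < p ^ (k-1) := Nat.pos_pow_of_pos _ (by omega)
  have hpk := pow_pred_mul (p := p) hk
  rw [D', rep', ← hpk]
  rw [show i % p^(k-1) + x * p^(k-1) + i / (p^(k-1)*p) * (p^(k-1)*p)
      = i % p^(k-1) + p^(k-1) * (x + p * (i / (p^(k-1)*p))) by ring]
  rw [Nat.add_mul_div_left _ _ hP, Nat.div_eq_of_lt (Nat.mod_lt _ hP), zero_add,
    Nat.add_mul_mod_self_left, Nat.mod_eq_of_lt hx]

omit hp in
lemma D'_mod_eq {M a b t : ℕ} (hab : a % M = b % M) (hdvd : p ^ (t-1) * p ∣ M) :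
    D' p a t = D' p b t := by
  rw [D', D', ← Nat.mod_mul_right_div_self, ← Nat.mod_mul_right_div_self,
    ← Nat.mod_mod_of_dvd a hdvd, ← Nat.mod_mod_of_dvd b hdvd, hab]

lemma D'_rep'_lt {k t : ℕ} (ht : 1 ≤ t) (htk : t < k) (i x : ℕ) :
    D' p (rep' p k i x) t = D' p i t := by
  have hk1 : 1 ≤ k := by omega
  apply D'_mod_eq (M := p ^ (k-1))
  · rw [rep', ← pow_pred_mul (p:=p) hk1]
    rw [show i % p^(k-1) + x * p^(k-1) + i / (p^(k-1)*p) * (p^(k-1)*p)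
        = i % p^(k-1) + (x + i/(p^(k-1)*p) * p) * p^(k-1) by ring]
    rw [Nat.add_mul_mod_self_right, Nat.mod_mod_of_dvd i (dvd_refl _)]
  · rw [pow_pred_mul (p:=p) ht]; exact pow_dvd_pow p (by omega)


lemma rep'_div {k : ℕ} (hk : 1 ≤ k) (i : ℕ) {x : ℕ} (hx : x < p) :
    rep' p k i x / p ^ k = i / p ^ k := by
  have hpk := pow_pred_mul (p := p) hk
  have hPpos : 0 < p ^ k := Nat.pos_pow_of_pos _ (by omega)
  have hsmall : i % p^(k-1) + x * p^(k-1) < p ^ k := by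
    have h1 : i % p^(k-1) < p^(k-1) := Nat.mod_lt _ (Nat.pos_pow_of_pos _ (by omega))
    have h2 : (x+1) * p^(k-1) ≤ p * p^(k-1) := Nat.mul_le_mul_right _ (by omega)
    have h3 : p ^ k = p * p^(k-1) := by rw [← hpk]; ring
    rw [add_mul, one_mul] at h2
    omega
  rw [rep', Nat.add_mul_div_right _ _ hPpos, Nat.div_eq_of_lt hsmall, zero_add]

lemma D'_rep'_gt {k t : ℕ} (hk : 1 ≤ k) (htk : k < t) (i : ℕ) {x : ℕ} (hx : x < p) :
    D' p (rep' p k i x) t = D' p i t := by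
  rw [D', D']
  have h1 : p ^ (t-1) = p ^ k * p ^ (t-1-k) := by rw [← pow_add]; congr 1; omega
  rw [h1, ← Nat.div_div_eq_div_mul, ← Nat.div_div_eq_div_mul, rep'_div hp hk i hx]

lemma rep'_lt {k m' : ℕ} (hk : 1 ≤ k) (hkm : k ≤ m') {i : ℕ} (hi : i < p ^ m') {x : ℕ}
    (hx : x < p) : rep' p k i x < p ^ m' := by
  have h1 : rep' p k i x / p ^ m' = i / p ^ m' := by
    have h2 : p ^ m' = p ^ k * p ^ (m' - k) := by rw [← pow_add]; congr 1; omega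
    rw [h2, ← Nat.div_div_eq_div_mul, ← Nat.div_div_eq_div_mul, rep'_div hp hk i hx]
  have h3 : i / p ^ m' = 0 := Nat.div_eq_of_lt hi
  have h4 : rep' p k i x / p ^ m' = 0 := by rw [h1, h3]
  by_contra hcon
  push_neg at hcon
  have := Nat.div_le_div_right (c := p ^ m') hcon
  rw [Nat.div_self (Nat.pos_pow_of_pos _ (by omega)), h4] at this
  omega

/-- numbers below `p^m` are determined by 0-indexed digits `< m`. -/
lemma D0_inj : ∀ (m' i j : ℕ), i < p ^ m' → j < p ^ m' →
    (∀ t, t < m' → i / p ^ t % p = j / p ^ t % p) → i = j := by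
  intro m'
  induction m' with
  | zero => intro i j hi hj _; simp at hi hj; omega
  | succ n ih =>
    intro i j hi hj hd
    have h0 : i % p = j % p := by simpa using hd 0 (by omega)
    have hip : i / p < p ^ n := by
      rw [Nat.div_lt_iff_lt_mul (by omega)]; rw [pow_succ] at hi; exact hi
    have hjp : j / p < p ^ n := by
      rw [Nat.div_lt_iff_lt_mul (by omega)]; rw [pow_succ] at hj; exact hj
    have hd' : ∀ t, t < n → i / p / p ^ t % p = j / p / p ^ t % p := by
      intro t ht
      have := hd (t+1) (by omega)
      simp only [pow_succ', ← Nat.div_div_eq_div_mul] at this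
      exact this
    have heq := ih (i/p) (j/p) hip hjp hd'
    have e1 := Nat.div_add_mod i p
    have e2 := Nat.div_add_mod j p
    rw [heq, h0] at e1
    omega

/-- if two numbers `< p^m` agree on (1-indexed) digits `s..m`, they differ by `< p^(s-1)`. -/
lemma high_digits_eq {m' s i j : ℕ} (hs : 1 ≤ s) (hsm : s ≤ m') (hi : i < p ^ m')
    (hj : j < p ^ m') (hd : ∀ t, s ≤ t → t ≤ m' → D' p i t = D' p j t) :
    i / p ^ (s-1) = j / p ^ (s-1) := by
  apply D0_inj hp (m' - (s-1))
  · rw [Nat.div_lt_iff_lt_mul (Nat.pos_pow_of_pos _ (by omega)), ← pow_add]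
    exact lt_of_lt_of_le hi (Nat.pow_le_pow_right (by omega) (by omega))
  · rw [Nat.div_lt_iff_lt_mul (Nat.pos_pow_of_pos _ (by omega)), ← pow_add]
    exact lt_of_lt_of_le hj (Nat.pow_le_pow_right (by omega) (by omega))
  · intro t ht
    simp only [Nat.div_div_eq_div_mul, ← pow_add]
    have := hd (s + t) (by omega) (by omega)
    rw [D', D'] at this
    rw [show s + t - 1 = s - 1 + t by omega] at this
    exact this

end digits

-- geometric sum lemma
lemma geom_zet {p : ℕ} (hp : 1 < p) (u w : ℕ) :
    ∑ x ∈ Finset.range p, (zet p ^ u * (zet p ^ w)⁻¹) ^ x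
      = if u % p = w % p then (p : ℂ) else 0 := by
  have hpne : p ≠ 0 := by omega
  have hz : zet p ≠ 0 := zet_ne_zero p hpne
  by_cases hc : u % p = w % p
  · rw [if_pos hc]
    have : zet p ^ u = zet p ^ w := by
      rw [← zet_pow_mod p hpne u, ← zet_pow_mod p hpne w, hc]
    rw [this, mul_inv_cancel₀ (pow_ne_zero _ hz)]
    simp
  · rw [if_neg hc]
    set r := zet p ^ u * (zet p ^ w)⁻¹ with hr
    have hrp : r ^ p = 1 := by
      rw [hr, mul_pow, inv_pow, ← pow_mul, ← pow_mul, mul_comm u p, mul_comm w p,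
        pow_mul, pow_mul, zet_pow_self p hpne, one_pow, one_pow, inv_one, mul_one]
    have hrne : r ≠ 1 := by
      intro h1
      apply hc
      apply zet_pow_inj p hpne
      rw [hr, mul_inv_eq_one₀ (pow_ne_zero _ hz)] at h1
      exact h1
    rw [geom_sum_eq hrne, hrp, sub_self, zero_div]

lemma digits_inj' {p : ℕ} (hp : 1 < p) {m i j : ℕ} (hi : i < p ^ m) (hj : j < p ^ m)
    (hd : ∀ t, 1 ≤ t → t ≤ m → D' p i t = D' p j t) : i = j := by
  apply D0_inj hp m i j hi hj
  intro t ht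
  have := hd (t+1) (by omega) (by omega)
  rw [D', D'] at this
  simpa using this

set_option maxHeartbeats 2000000 in
theorem stmt1 (p m s lam : ℕ) (hp : p.Prime) (hm : 1 ≤ m) (hs : 1 ≤ s) (hsm : s ≤ m)
    (hlam : 0 < lam) (hpl : p ∣ lam)
    (π : Equiv.Perm ℕ) (hπ : ∀ i ∈ Finset.Icc s m, π i ∈ Finset.Icc s m)
    (g : ℕ → ZMod lam) (g₀ : ZMod lam)
    (h : (ℕ → ZMod p) → ZMod lam)
    (hdep : ∀ u w : ℕ → ZMod p, (∀ t, 1 ≤ t → t ≤ s - 1 → u t = w t) → h u = h w)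
    (hs1 : s = 1 → ∀ u, h u = 0)
    (f : (ℕ → ZMod p) → ZMod lam)
    (hf : ∀ v : ℕ → ZMod p,
      f v = ((lam / p : ℕ) : ZMod lam) *
            (∑ i ∈ Finset.Ico s m, ((v (π i)).val : ZMod lam) * ((v (π (i + 1))).val : ZMod lam))
        + ∑ i ∈ Finset.Icc 1 m, g i * ((v i).val : ZMod lam) + g₀ + h v)
    (a : ZMod p → (ℕ → ZMod p) → ZMod lam)
    (ha : ∀ (γ : ZMod p) (v : ℕ → ZMod p),
      a γ v = f v + ((lam / p : ℕ) : ZMod lam) * ((v (π s)).val : ZMod lam) * (γ.val : ZMod lam))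
    (τ : ℕ) (hτ1 : p ^ (s - 1) < τ) (hτL : τ < p ^ m) :
    ∑ γ ∈ Finset.range p,
      aacf (p ^ m) (fun i => eZMod lam (a (γ : ZMod p) (dig p i))) τ = 0 := by
  haveI : NeZero p := ⟨hp.pos.ne'⟩
  haveI : NeZero lam := ⟨hlam.ne'⟩
  have hp1 : 1 < p := hp.one_lt
  have hpne : p ≠ 0 := hp.pos.ne'
  have hlamne : lam ≠ 0 := hlam.ne'
  have hval : ∀ i t, (dig p i t).val = D' p i t := fun i t =>
    ZMod.val_natCast_of_lt (D'_lt hp1 i t)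
  have hdigD : ∀ i t, dig p i t = ((D' p i t : ℕ) : ZMod p) := fun i t => rfl
  set L := p ^ m with hL
  have hlp : lam / p * p = lam := Nat.div_mul_cancel hpl
  -- zet p as a power of zet lam
  have hzp : zet lam ^ (lam / p) = zet p := by
    rw [zet, zet, ← Complex.exp_nat_mul]
    congr 1
    have hlc : ((lam / p : ℕ) : ℂ) * p = lam := by exact_mod_cast congrArg (Nat.cast : ℕ → ℂ) hlp
    have hpc : (p : ℂ) ≠ 0 := by exact_mod_cast hpne
    have hlamc : (lam : ℂ) ≠ 0 := by exact_mod_cast hlamne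
    have hcast : ((lam / p : ℕ) : ℂ) = (lam : ℂ) / p := by
      rw [eq_div_iff hpc]; exact hlc
    rw [hcast]
    field_simp
  have eK : ∀ n : ℕ, eZMod lam (((lam / p : ℕ) : ZMod lam) * ((n : ℕ) : ZMod lam))
      = zet p ^ n := by
    intro n
    rw [← Nat.cast_mul, eZMod_natCast, ← hzp, ← pow_mul]
  -- the quadratic and linear parts
  set Qn : ℕ → ℕ := fun n => ∑ l ∈ Finset.Ico s m, D' p n (π l) * D' p n (π (l+1)) with hQn
  set Ln : ℕ → ZMod lam := fun n => ∑ t ∈ Finset.Icc 1 m, g t * ((D' p n t : ℕ) : ZMod lam)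
    with hLn
  set E : ℕ → ℂ := fun n => eZMod lam (f (dig p n)) with hE
  have Esplit : ∀ n : ℕ, E n = zet p ^ Qn n *
      (eZMod lam (Ln n) * (eZMod lam g₀ * eZMod lam (h (dig p n)))) := by
    intro n
    show eZMod lam (f (dig p n)) = _
    rw [hf, eZMod_add, eZMod_add, eZMod_add]
    have e1 : eZMod lam (((lam / p : ℕ) : ZMod lam) *
        (∑ i ∈ Finset.Ico s m, ((dig p n (π i)).val : ZMod lam) *
          ((dig p n (π (i+1))).val : ZMod lam)))
        = zet p ^ Qn n := by
      rw [show (∑ i ∈ Finset.Ico s m, ((dig p n (π i)).val : ZMod lam) *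
          ((dig p n (π (i+1))).val : ZMod lam)) = ((Qn n : ℕ) : ZMod lam) by
        simp only [hval, hQn]; push_cast; rfl]
      exact eK _
    have e2 : (∑ i ∈ Finset.Icc 1 m, g i * ((dig p n i).val : ZMod lam)) = Ln n := by
      simp only [hval, hLn]
    rw [e1, e2]
    ring
  -- step over γ
  have hstep : ∀ i : ℕ, ∑ γ ∈ Finset.range p,
      (eZMod lam (a (γ : ZMod p) (dig p i)) *
        (starRingEnd ℂ) (eZMod lam (a (γ : ZMod p) (dig p (i+τ)))))
      = (if D' p i (π s) = D' p (i+τ) (π s) then (p:ℂ) else 0) *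
        (E i * (starRingEnd ℂ) (E (i+τ))) := by
    intro i
    have hterm : ∀ γ ∈ Finset.range p,
        eZMod lam (a (γ : ZMod p) (dig p i)) *
          (starRingEnd ℂ) (eZMod lam (a (γ : ZMod p) (dig p (i+τ))))
        = (E i * (starRingEnd ℂ) (E (i+τ))) *
          (zet p ^ (D' p i (π s)) * (zet p ^ (D' p (i+τ) (π s)))⁻¹) ^ γ := by
      intro γ hγ
      rw [Finset.mem_range] at hγ
      have hγv : ((γ : ZMod p)).val = γ := ZMod.val_natCast_of_lt hγ
      have key : ∀ n : ℕ, eZMod lam (a (γ : ZMod p) (dig p n))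
          = E n * zet p ^ (D' p n (π s) * γ) := by
        intro n
        rw [ha, eZMod_add]
        have h2 : eZMod lam (((lam / p : ℕ) : ZMod lam) * ((dig p n (π s)).val : ZMod lam) *
            (((γ : ZMod p)).val : ZMod lam)) = zet p ^ (D' p n (π s) * γ) := by
          rw [show ((lam / p : ℕ) : ZMod lam) * ((dig p n (π s)).val : ZMod lam) *
              (((γ : ZMod p)).val : ZMod lam)
              = ((lam / p : ℕ) : ZMod lam) * ((D' p n (π s) * γ : ℕ) : ZMod lam) by
            rw [hval, hγv]; push_cast; ring]
          exact eK _
        rw [h2]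
      rw [key, key, map_mul]
      rw [map_pow, conj_zet p hpne]
      rw [pow_mul, pow_mul, inv_pow, mul_pow]
      ring
    rw [Finset.sum_congr rfl hterm, ← Finset.mul_sum, geom_zet hp1,
      Nat.mod_eq_of_lt (D'_lt hp1 i (π s)), Nat.mod_eq_of_lt (D'_lt hp1 (i+τ) (π s)), mul_comm]
  -- reduce to the combinatorial claim
  unfold aacf
  rw [Finset.sum_comm]
  simp only []
  rw [Finset.sum_congr rfl (fun i _ => hstep i)]
  have hsplit : ∀ i ∈ Finset.range (L - τ),
      (if D' p i (π s) = D' p (i+τ) (π s) then (p:ℂ) else 0) *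
        (E i * (starRingEnd ℂ) (E (i+τ)))
      = if D' p i (π s) = D' p (i+τ) (π s)
          then (p:ℂ) * (E i * (starRingEnd ℂ) (E (i+τ))) else 0 := by
    intro i _
    split <;> simp
  rw [Finset.sum_congr rfl hsplit, ← Finset.sum_filter]
  set S := (Finset.range (L - τ)).filter (fun i => D' p i (π s) = D' p (i+τ) (π s)) with hS
  rw [← Finset.mul_sum]
  have main : ∑ i ∈ S, E i * (starRingEnd ℂ) (E (i+τ)) = 0 := by
    have hπbij : ∀ t ∈ Finset.Icc s m, ∃ l, l ∈ Finset.Icc s m ∧ π l = t := by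
      intro t ht
      have himg : (Finset.Icc s m).image π = Finset.Icc s m := by
        apply Finset.eq_of_subset_of_card_le
        · intro x hx
          obtain ⟨l, hl, rfl⟩ := Finset.mem_image.mp hx
          exact hπ l hl
        · rw [Finset.card_image_of_injective _ π.injective]
      rw [← himg] at ht
      obtain ⟨l, hl, hlt⟩ := Finset.mem_image.mp ht
      exact ⟨l, hl, hlt⟩
    set V : ℕ → Finset ℕ := fun i =>
      (Finset.Icc s m).filter (fun l => D' p i (π l) ≠ D' p (i+τ) (π l)) with hV
    have hmemS : ∀ i ∈ S, i + τ < L ∧ D' p i (π s) = D' p (i+τ) (π s) := by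
      intro i hi
      rw [hS, Finset.mem_filter, Finset.mem_range] at hi
      exact ⟨by omega, hi.2⟩
    have hLpm : L = p ^ m := hL
    have hVne : ∀ i ∈ S, (V i).Nonempty := by
      intro i hi
      obtain ⟨hiL, _⟩ := hmemS i hi
      by_contra hemp
      rw [Finset.not_nonempty_iff_eq_empty, Finset.filter_eq_empty_iff] at hemp
      push_neg at hemp
      have hall : ∀ t, s ≤ t → t ≤ m → D' p i t = D' p (i+τ) t := by
        intro t hst htm
        obtain ⟨l, hl, rfl⟩ := hπbij t (Finset.mem_Icc.mpr ⟨hst, htm⟩)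
        exact hemp hl
      have hdiv := high_digits_eq hp1 hs hsm (show i < p ^ m by omega)
        (show i + τ < p ^ m by omega) hall
      have e1 := Nat.div_add_mod i (p ^ (s-1))
      have e2 := Nat.div_add_mod (i+τ) (p ^ (s-1))
      have hm2 : (i+τ) % p^(s-1) < p^(s-1) :=
        Nat.mod_lt _ (Nat.pos_pow_of_pos _ (by omega))
      rw [hdiv] at e1
      generalize hgen : p ^ (s-1) = P at e1 e2 hm2 hτ1
      omega
    set vf : ℕ → ℕ := fun i => if hne : (V i).Nonempty then (V i).min' hne else 0 with hvf
    have hvfS : ∀ i ∈ S, vf i ∈ V i ∧ ∀ l ∈ V i, vf i ≤ l := by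
      intro i hi
      have hne := hVne i hi
      have : vf i = (V i).min' hne := by rw [hvf]; exact dif_pos hne
      rw [this]
      exact ⟨(V i).min'_mem hne, fun l hl => (V i).min'_le l hl⟩
    have hvprop : ∀ i ∈ S, (s + 1 ≤ vf i ∧ vf i ≤ m) ∧
        D' p i (π (vf i)) ≠ D' p (i+τ) (π (vf i)) ∧
        (∀ l, s ≤ l → l ≤ m → l < vf i → D' p i (π l) = D' p (i+τ) (π l)) := by
      intro i hi
      obtain ⟨hmem, hmin⟩ := hvfS i hi
      simp only [hV, Finset.mem_filter, Finset.mem_Icc] at hmem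
      refine ⟨⟨?_, hmem.1.2⟩, hmem.2, ?_⟩
      · rcases Nat.eq_or_lt_of_le hmem.1.1 with he | hlt
        · exfalso; exact hmem.2 (by rw [← he]; exact (hmemS i hi).2)
        · omega
      · intro l hsl hlm hlv
        by_contra hne
        have := hmin l (by
          simp only [hV, Finset.mem_filter, Finset.mem_Icc]
          exact ⟨⟨hsl, hlm⟩, hne⟩)
        omega
    set kf : ℕ → ℕ := fun i => π (vf i - 1) with hkf
    have hkprop : ∀ i ∈ S, s ≤ kf i ∧ kf i ≤ m := by
      intro i hi
      obtain ⟨⟨h1, h2⟩, _, _⟩ := hvprop i hi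
      have hmem := hπ (vf i - 1) (Finset.mem_Icc.mpr ⟨by omega, by omega⟩)
      rw [Finset.mem_Icc] at hmem
      exact hmem
    have hDt : ∀ (k iN x t : ℕ), 1 ≤ k → x < p → 1 ≤ t → t ≠ k →
        D' p (rep' p k iN x) t = D' p iN t := by
      intro k iN x t hk hx ht htk
      rcases Nat.lt_or_ge t k with hlt | hge
      · exact D'_rep'_lt hp1 ht hlt iN x
      · exact D'_rep'_gt hp1 hk (by omega) iN hx
    have htrans : ∀ i ∈ S, ∀ x, x < p →
        (rep' p (kf i) i x ∈ S ∧ vf (rep' p (kf i) i x) = vf i) ∧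
        rep' p (kf i) i x + τ = rep' p (kf i) (i+τ) x := by
      intro i hi x hx
      obtain ⟨⟨hv1, hv2⟩, hvne, hvmin⟩ := hvprop i hi
      obtain ⟨hks, hkm⟩ := hkprop i hi
      have hk1 : 1 ≤ kf i := by omega
      obtain ⟨hiL, hDs⟩ := hmemS i hi
      have hDk : D' p i (kf i) = D' p (i+τ) (kf i) :=
        hvmin (vf i - 1) (by omega) (by omega) (by omega)
      have hadd : rep' p (kf i) (i+τ) x = rep' p (kf i) i x + τ := rep'_add hp1 hk1 hDk rfl
      have hkiff : ∀ l, π l = kf i ↔ l = vf i - 1 :=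
        fun l => ⟨fun he => π.injective he, fun he => by rw [he]⟩
      have hdi : ∀ t, 1 ≤ t → t ≠ kf i → D' p (rep' p (kf i) i x) t = D' p i t :=
        fun t ht htk => hDt _ _ _ _ hk1 hx ht htk
      have hdj : ∀ t, 1 ≤ t → t ≠ kf i →
          D' p (rep' p (kf i) i x + τ) t = D' p (i+τ) t := by
        intro t ht htk; rw [← hadd] at *; exact hDt _ _ _ _ hk1 hx ht htk
      have hdik : D' p (rep' p (kf i) i x) (kf i) = x := D'_rep'_self hp1 hk1 i hx
      have hdjk : D' p (rep' p (kf i) i x + τ) (kf i) = x := by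
        rw [← hadd] at *; exact D'_rep'_self hp1 hk1 (i+τ) hx
      have hπpos : ∀ l, s ≤ l → l ≤ m → 1 ≤ π l ∧ π l ≤ m := by
        intro l h1 h2
        have hmem := hπ l (Finset.mem_Icc.mpr ⟨h1, h2⟩)
        rw [Finset.mem_Icc] at hmem
        omega
      have hi'L : rep' p (kf i) i x + τ < L := by
        rw [← hadd, hLpm]
        exact rep'_lt hp1 hk1 hkm (show i + τ < p ^ m by omega) hx
      refine ⟨⟨?_, ?_⟩, hadd.symm⟩
      · rw [hS, Finset.mem_filter, Finset.mem_range]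
        constructor
        · omega
        · by_cases hcase : s = vf i - 1
          · have hπs : π s = kf i := by simp only [hkf]; rw [hcase]
            rw [hπs, hdik, hdjk]
          · have hπs : π s ≠ kf i := fun he => hcase ((hkiff s).mp he)
            have h1 : 1 ≤ π s := (hπpos s le_rfl hsm).1
            rw [hdi _ h1 hπs, hdj _ h1 hπs]
            exact hDs
      · have hVeq : V (rep' p (kf i) i x) = V i := by
          rw [hV]
          apply Finset.filter_congr
          intro l hl
          rw [Finset.mem_Icc] at hl
          have hπl := hπpos l hl.1 hl.2
          by_cases hcase : l = vf i - 1
          · have hπs : π l = kf i := by simp only [hkf]; rw [hcase]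
            rw [hπs, hdik, hdjk]
            constructor
            · intro hcon; exact absurd rfl hcon
            · intro hcon; exact absurd hDk hcon
          · have hπs : π l ≠ kf i := fun he => hcase ((hkiff l).mp he)
            rw [hdi _ hπl.1 hπs, hdj _ hπl.1 hπs]
        have hne' : (V (rep' p (kf i) i x)).Nonempty := by
          rw [hVeq]; exact hVne i hi
        have e1 : vf (rep' p (kf i) i x) = (V (rep' p (kf i) i x)).min' hne' := by
          rw [hvf]; exact dif_pos hne'
        have e2 : vf i = (V i).min' (hVne i hi) := by
          rw [hvf]; exact dif_pos (hVne i hi)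
        rw [e1, e2]
        congr 1
    -- base map
    set bf : ℕ → ℕ := fun i => rep' p (kf i) i 0 with hbf
    have hbase : ∀ i ∈ S, bf i ∈ S ∧ vf (bf i) = vf i ∧ kf (bf i) = kf i := by
      intro i hi
      obtain ⟨⟨h1, h2⟩, _⟩ := htrans i hi 0 (by omega)
      refine ⟨h1, h2, ?_⟩
      simp only [hkf, hbf] at h2 ⊢
      rw [h2]
    have hBound : ∀ i ∈ S, i < p ^ m := by
      intro i hi
      rw [hS, Finset.mem_filter, Finset.mem_range] at hi
      omega
    have hdigit_eq : ∀ iN iM : ℕ, iN < p ^ m → iM < p ^ m →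
        (∀ t, 1 ≤ t → t ≤ m → D' p iN t = D' p iM t) → iN = iM :=
      fun iN iM h1 h2 h3 => digits_inj' hp1 h1 h2 h3
    have hbase2 : ∀ i ∈ S, ∀ x, x < p → bf (rep' p (kf i) i x) = bf i := by
      intro i hi x hx
      obtain ⟨⟨hiS', hvf'⟩, _⟩ := htrans i hi x hx
      have hkf' : kf (rep' p (kf i) i x) = kf i := by
        simp only [hkf]; rw [hvf']
      obtain ⟨hks, hkm⟩ := hkprop i hi
      have hk1 : 1 ≤ kf i := by omega
      have hb1 : bf (rep' p (kf i) i x) = rep' p (kf i) (rep' p (kf i) i x) 0 := by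
        simp only [hbf]; rw [hkf']
      rw [hb1]
      simp only [hbf]
      apply hdigit_eq
      · exact rep'_lt hp1 hk1 hkm (hBound _ hiS') (by omega)
      · exact rep'_lt hp1 hk1 hkm (hBound i hi) (by omega)
      · intro t ht htm
        by_cases hc : t = kf i
        · rw [hc, D'_rep'_self hp1 hk1 _ (show 0 < p by omega),
            D'_rep'_self hp1 hk1 _ (show 0 < p by omega)]
        · rw [hDt (kf i) (rep' p (kf i) i x) 0 t hk1 (show 0 < p by omega) ht hc,
            hDt (kf i) i 0 t hk1 (show 0 < p by omega) ht hc,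
            hDt (kf i) i x t hk1 hx ht hc]
    -- fibers
    have hrepinj : ∀ i0 ∈ S, ∀ x ∈ Finset.range p, ∀ y ∈ Finset.range p,
        rep' p (kf i0) i0 x = rep' p (kf i0) i0 y → x = y := by
      intro i0 hi0 x hx y hy he
      rw [Finset.mem_range] at hx hy
      obtain ⟨hks, hkm⟩ := hkprop i0 hi0
      have hk1 : 1 ≤ kf i0 := by omega
      have := D'_rep'_self hp1 hk1 i0 hx
      rw [he, D'_rep'_self hp1 hk1 i0 hy] at this
      omega
    have hfib : ∀ i0 ∈ S, S.filter (fun i => bf i = bf i0) =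
        (Finset.range p).image (fun x => rep' p (kf i0) i0 x) := by
      intro i0 hi0
      obtain ⟨hks, hkm⟩ := hkprop i0 hi0
      have hk1 : 1 ≤ kf i0 := by omega
      ext a
      rw [Finset.mem_filter, Finset.mem_image]
      constructor
      · rintro ⟨haS, hab⟩
        have hka : kf a = kf i0 := by
          have h1 := (hbase a haS).2.2
          have h2 := (hbase i0 hi0).2.2
          rw [hab] at h1
          rw [← h1, h2]
        refine ⟨D' p a (kf i0), Finset.mem_range.mpr (D'_lt hp1 a _), ?_⟩
        apply hdigit_eq
        · exact rep'_lt hp1 hk1 hkm (hBound i0 hi0) (D'_lt hp1 a (kf i0))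
        · exact hBound a haS
        · intro t ht htm
          by_cases hc : t = kf i0
          · rw [hc, D'_rep'_self hp1 hk1 i0 (D'_lt hp1 a (kf i0))]
          · rw [hDt (kf i0) i0 (D' p a (kf i0)) t hk1 (D'_lt hp1 a (kf i0)) ht hc]
            have e1 : D' p (bf a) t = D' p a t := by
              simp only [hbf]; rw [hka]
              exact hDt (kf i0) a 0 t hk1 (show 0 < p by omega) ht hc
            have e2 : D' p (bf i0) t = D' p i0 t := by
              simp only [hbf]
              exact hDt (kf i0) i0 0 t hk1 (show 0 < p by omega) ht hc
            rw [← e1, hab, e2]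
      · rintro ⟨x, hx, rfl⟩
        rw [Finset.mem_range] at hx
        exact ⟨((htrans i0 hi0 x hx).1).1, hbase2 i0 hi0 x hx⟩
    -- decompose the sum into fibers
    rw [← Finset.sum_fiberwise_of_maps_to
      (fun i hi => Finset.mem_image_of_mem bf hi : ∀ i ∈ S, bf i ∈ S.image bf)]
    apply Finset.sum_eq_zero
    intro b hb
    obtain ⟨i0, hi0, rfl⟩ := Finset.mem_image.mp hb
    rw [hfib i0 hi0, Finset.sum_image (hrepinj i0 hi0)]
    -- per-fiber vanishing
    obtain ⟨⟨hv1, hv2⟩, hvneq, hvmin⟩ := hvprop i0 hi0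
    obtain ⟨hks, hkm⟩ := hkprop i0 hi0
    have hk1 : 1 ≤ kf i0 := by omega
    obtain ⟨hi0L, hDs0⟩ := hmemS i0 hi0
    have hkiff : ∀ l, π l = kf i0 ↔ l = vf i0 - 1 :=
      fun l => ⟨fun he => π.injective he, fun he => by simp only [hkf]; rw [he]⟩
    have hπpos : ∀ l, s ≤ l → l ≤ m → 1 ≤ π l ∧ π l ≤ m := by
      intro l h1 h2
      have hmem := hπ l (Finset.mem_Icc.mpr ⟨h1, h2⟩)
      rw [Finset.mem_Icc] at hmem
      omega
    have hadd : ∀ x, x < p → rep' p (kf i0) i0 x + τ = rep' p (kf i0) (i0+τ) x :=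
      fun x hx => (htrans i0 hi0 x hx).2
    -- decomposition of the quadratic form
    have hQdec : ∀ (n x : ℕ), x < p → Qn (rep' p (kf i0) n x)
        = x * (D' p n (π (vf i0)) +
            ∑ l ∈ Finset.Ico s m, (if l + 1 = vf i0 - 1 then D' p n (π l) else 0))
          + ∑ l ∈ Finset.Ico s m, (if l = vf i0 - 1 ∨ l + 1 = vf i0 - 1 then 0
              else D' p n (π l) * D' p n (π (l+1))) := by
      intro n x hx
      have hptw : ∀ l ∈ Finset.Ico s m,
          D' p (rep' p (kf i0) n x) (π l) * D' p (rep' p (kf i0) n x) (π (l+1))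
          = x * ((if l = vf i0 - 1 then D' p n (π (l+1)) else 0)
              + (if l + 1 = vf i0 - 1 then D' p n (π l) else 0))
            + (if l = vf i0 - 1 ∨ l + 1 = vf i0 - 1 then 0
                else D' p n (π l) * D' p n (π (l+1))) := by
        intro l hl
        rw [Finset.mem_Ico] at hl
        have hπl := hπpos l hl.1 (by omega)
        have hπl1 := hπpos (l+1) (by omega) (by omega)
        by_cases h1 : l = vf i0 - 1
        · have hne2 : ¬ (l + 1 = vf i0 - 1) := by omega
          rw [if_pos h1, if_neg hne2, if_pos (Or.inl h1)]
          have e1 : D' p (rep' p (kf i0) n x) (π l) = x := by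
            rw [(hkiff l).mpr h1]
            exact D'_rep'_self hp1 hk1 n hx
          have e2 : D' p (rep' p (kf i0) n x) (π (l+1)) = D' p n (π (l+1)) :=
            hDt _ _ _ _ hk1 hx hπl1.1 (fun he => by
              have := (hkiff (l+1)).mp he; omega)
          rw [e1, e2]; ring
        · by_cases h2 : l + 1 = vf i0 - 1
          · rw [if_neg h1, if_pos h2, if_pos (Or.inr h2)]
            have e1 : D' p (rep' p (kf i0) n x) (π l) = D' p n (π l) :=
              hDt _ _ _ _ hk1 hx hπl.1 (fun he => by
                have := (hkiff l).mp he; omega)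
            have e2 : D' p (rep' p (kf i0) n x) (π (l+1)) = x := by
              rw [(hkiff (l+1)).mpr h2]
              exact D'_rep'_self hp1 hk1 n hx
            rw [e1, e2]; ring
          · rw [if_neg h1, if_neg h2, if_neg (not_or.mpr ⟨h1, h2⟩)]
            have e1 : D' p (rep' p (kf i0) n x) (π l) = D' p n (π l) :=
              hDt _ _ _ _ hk1 hx hπl.1 (fun he => by
                have := (hkiff l).mp he; omega)
            have e2 : D' p (rep' p (kf i0) n x) (π (l+1)) = D' p n (π (l+1)) :=
              hDt _ _ _ _ hk1 hx hπl1.1 (fun he => by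
                have := (hkiff (l+1)).mp he; omega)
            rw [e1, e2]; ring
      have hstep1 : Qn (rep' p (kf i0) n x) = ∑ l ∈ Finset.Ico s m,
          (x * ((if l = vf i0 - 1 then D' p n (π (l+1)) else 0)
              + (if l + 1 = vf i0 - 1 then D' p n (π l) else 0))
            + (if l = vf i0 - 1 ∨ l + 1 = vf i0 - 1 then 0
                else D' p n (π l) * D' p n (π (l+1)))) := by
        simp only [hQn]
        exact Finset.sum_congr rfl hptw
      rw [hstep1, Finset.sum_add_distrib, ← Finset.mul_sum, Finset.sum_add_distrib]
      congr 2
      rw [Finset.sum_ite_eq' (Finset.Ico s m) (vf i0 - 1) (fun l => D' p n (π (l+1)))]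
      rw [if_pos (Finset.mem_Ico.mpr ⟨by omega, by omega⟩)]
      rw [show vf i0 - 1 + 1 = vf i0 by omega]
    -- decomposition of the linear form
    have hkmem : kf i0 ∈ Finset.Icc 1 m := Finset.mem_Icc.mpr ⟨by omega, hkm⟩
    have hLdec : ∀ (n x : ℕ), x < p → Ln (rep' p (kf i0) n x)
        = (∑ t ∈ (Finset.Icc 1 m).erase (kf i0), g t * ((D' p n t : ℕ) : ZMod lam))
          + g (kf i0) * ((x : ℕ) : ZMod lam) := by
      intro n x hx
      simp only [hLn]
      rw [← Finset.sum_erase_add _ _ hkmem]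
      congr 1
      · apply Finset.sum_congr rfl
        intro t ht
        rw [Finset.mem_erase, Finset.mem_Icc] at ht
        rw [hDt _ _ _ _ hk1 hx ht.2.1 ht.1]
      · rw [D'_rep'_self hp1 hk1 n hx]
    -- the h-part is unchanged
    have hhdec : ∀ (n x : ℕ), x < p → h (dig p (rep' p (kf i0) n x)) = h (dig p n) := by
      intro n x hx
      apply hdep
      intro t ht1 ht2
      rw [hdigD, hdigD, hDt _ _ _ _ hk1 hx ht1 (by omega)]
    -- digits at position π (vf i0) differ and are preserved mod the fiber
    have hcij : (∑ l ∈ Finset.Ico s m, (if l + 1 = vf i0 - 1 then D' p (i0+τ) (π l) else 0))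
        = ∑ l ∈ Finset.Ico s m, (if l + 1 = vf i0 - 1 then D' p i0 (π l) else 0) := by
      apply Finset.sum_congr rfl
      intro l hl
      rw [Finset.mem_Ico] at hl
      by_cases hc : l + 1 = vf i0 - 1
      · rw [if_pos hc, if_pos hc, hvmin l hl.1 (by omega) (by omega)]
      · rw [if_neg hc, if_neg hc]
    -- the two exponents differ mod p
    have hmodne : ¬ ((D' p i0 (π (vf i0)) +
          ∑ l ∈ Finset.Ico s m, (if l + 1 = vf i0 - 1 then D' p i0 (π l) else 0)) % p
        = (D' p (i0+τ) (π (vf i0)) +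
          ∑ l ∈ Finset.Ico s m, (if l + 1 = vf i0 - 1 then D' p (i0+τ) (π l) else 0)) % p) := by
      rw [hcij]
      intro hcon
      have h1 : D' p i0 (π (vf i0)) ≡ D' p (i0+τ) (π (vf i0)) [MOD p] :=
        Nat.ModEq.add_right_cancel' _ hcon
      rw [Nat.ModEq, Nat.mod_eq_of_lt (D'_lt hp1 _ _), Nat.mod_eq_of_lt (D'_lt hp1 _ _)] at h1
      exact hvneq h1
    -- per-x closed form
    have hzne : zet p ≠ 0 := zet_ne_zero p hpne
    have hxform : ∀ x ∈ Finset.range p,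
        E (rep' p (kf i0) i0 x) * (starRingEnd ℂ) (E (rep' p (kf i0) i0 x + τ))
        = ((zet p ^ (∑ l ∈ Finset.Ico s m, (if l = vf i0 - 1 ∨ l + 1 = vf i0 - 1 then 0
              else D' p i0 (π l) * D' p i0 (π (l+1))))
            * (eZMod lam (∑ t ∈ (Finset.Icc 1 m).erase (kf i0),
                g t * ((D' p i0 t : ℕ) : ZMod lam))
              * (eZMod lam g₀ * eZMod lam (h (dig p i0)))))
          * ((starRingEnd ℂ) (zet p ^ (∑ l ∈ Finset.Ico s m,
                (if l = vf i0 - 1 ∨ l + 1 = vf i0 - 1 then 0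
                  else D' p (i0+τ) (π l) * D' p (i0+τ) (π (l+1))))
              * (eZMod lam (∑ t ∈ (Finset.Icc 1 m).erase (kf i0),
                  g t * ((D' p (i0+τ) t : ℕ) : ZMod lam))
                * (eZMod lam g₀ * eZMod lam (h (dig p (i0+τ))))))))
          * (zet p ^ (D' p i0 (π (vf i0)) +
                ∑ l ∈ Finset.Ico s m, (if l + 1 = vf i0 - 1 then D' p i0 (π l) else 0))
              * (zet p ^ (D' p (i0+τ) (π (vf i0)) +
                ∑ l ∈ Finset.Ico s m, (if l + 1 = vf i0 - 1 then D' p (i0+τ) (π l) else 0)))⁻¹) ^ x := by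
      intro x hx
      rw [Finset.mem_range] at hx
      rw [hadd x hx, Esplit, Esplit, hQdec i0 x hx, hQdec (i0+τ) x hx,
        hLdec i0 x hx, hLdec (i0+τ) x hx, hhdec i0 x hx, hhdec (i0+τ) x hx,
        eZMod_add, eZMod_add]
      simp only [map_mul, map_pow, conj_zet p hpne, conj_eZMod]
      have hzx : ∀ n : ℕ, zet p ^ n ≠ 0 := fun n => pow_ne_zero n hzne
      field_simp [hzx, eZMod_ne_zero]
      simp only [one_div, inv_pow, div_pow]
      field_simp
      ring
    rw [Finset.sum_congr rfl hxform, ← Finset.mul_sum, geom_zet hp1, if_neg hmodne, mul_zero]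
  rw [main, mul_zero]
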